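/- Let W ∈ ℝ^{d×n} be a normalized matrix, i.e., WWᵀ = I_d and each column w_i satisfies ‖w_i‖₂ ≤ 2√(d/n). Then the zonotope Z = {Wx : ‖x‖_∞ ≤ 1} satisfies (1/2)√(n/d)·B₂^d ⊆ Z ⊆ √n·B₂^d, where B₂^d is the Euclidean unit ball. -/
import Mathlib


open Matrix

theorem stmt3 (d n : ℕ) (W : Matrix (Fin d) (Fin n) ℝ)
    (hW : W * W.transpose = 1)
    (hcol : ∀ j, Real.sqrt (∑ i, (W i j) ^ 2) ≤ 2 * Real.sqrt ((d : ℝ) / n)) :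
    {y : Fin d → ℝ | Real.sqrt (∑ i, y i ^ 2) ≤ (1 / 2) * Real.sqrt ((n : ℝ) / d)} ⊆
      {z : Fin d → ℝ | ∃ x : Fin n → ℝ, (∀ i, |x i| ≤ 1) ∧ z = W.mulVec x} ∧
    {z : Fin d → ℝ | ∃ x : Fin n → ℝ, (∀ i, |x i| ≤ 1) ∧ z = W.mulVec x} ⊆
      {y : Fin d → ℝ | Real.sqrt (∑ i, y i ^ 2) ≤ Real.sqrt n} := by
  constructor
  · intro y hy
    simp only [Set.mem_setOf_eq] at hy ⊢
    refine ⟨W.transpose.mulVec y, ?_, ?_⟩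
    · intro j
      have hxj : W.transpose.mulVec y j = ∑ i, W i j * y i := by
        simp [Matrix.mulVec, dotProduct, Matrix.transpose_apply]
      have cs : (∑ i, W i j * y i) ^ 2 ≤ (∑ i, (W i j) ^ 2) * (∑ i, (y i) ^ 2) :=
        Finset.sum_mul_sq_le_sq_mul_sq _ _ _
      have habs : |∑ i, W i j * y i| ≤
          Real.sqrt (∑ i, (W i j) ^ 2) * Real.sqrt (∑ i, (y i) ^ 2) := by
        rw [← Real.sqrt_sq_eq_abs, ← Real.sqrt_mul (by positivity)]
        exact Real.sqrt_le_sqrt cs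
      have hb : Real.sqrt (∑ i, (W i j) ^ 2) * Real.sqrt (∑ i, (y i) ^ 2) ≤
          (2 * Real.sqrt ((d : ℝ) / n)) * ((1 / 2) * Real.sqrt ((n : ℝ) / d)) :=
        mul_le_mul (hcol j) hy (Real.sqrt_nonneg _) (by positivity)
      have hone : (2 * Real.sqrt ((d : ℝ) / n)) * ((1 / 2) * Real.sqrt ((n : ℝ) / d)) ≤ 1 := by
        have h1 : (2 * Real.sqrt ((d : ℝ) / n)) * ((1 / 2) * Real.sqrt ((n : ℝ) / d)) =
            Real.sqrt (((d : ℝ) / n) * ((n : ℝ) / d)) := by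
          rw [Real.sqrt_mul (by positivity)]; ring
        rw [h1]
        have h2 : ((d : ℝ) / n) * ((n : ℝ) / d) ≤ 1 := by
          rcases eq_or_ne (d : ℝ) 0 with hd | hd
          · simp [hd]
          rcases eq_or_ne (n : ℝ) 0 with hn | hn
          · simp [hn]
          · exact le_of_eq (by field_simp)
        calc Real.sqrt (((d : ℝ) / n) * ((n : ℝ) / d)) ≤ Real.sqrt 1 := Real.sqrt_le_sqrt h2
          _ = 1 := Real.sqrt_one
      rw [hxj]
      exact habs.trans (hb.trans hone)
    · rw [Matrix.mulVec_mulVec, hW, Matrix.one_mulVec]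
  · rintro z ⟨x, hx, rfl⟩
    simp only [Set.mem_setOf_eq]
    set u := W.mulVec x with hu
    set v := W.transpose.mulVec u with hv
    have hWv : W.mulVec v = u := by
      rw [hv, Matrix.mulVec_mulVec, hW, Matrix.one_mulVec]
    have hxv : x ⬝ᵥ v = u ⬝ᵥ u := by
      rw [hv, Matrix.dotProduct_mulVec, Matrix.vecMul_transpose, ← hu]
    have hvv : v ⬝ᵥ v = u ⬝ᵥ u := by
      conv_lhs => rw [hv, Matrix.dotProduct_mulVec, Matrix.vecMul_transpose, hWv]
    have key : u ⬝ᵥ u ≤ x ⬝ᵥ x := by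
      have hnn : 0 ≤ (x - v) ⬝ᵥ (x - v) := by
        simp only [dotProduct, Pi.sub_apply]
        exact Finset.sum_nonneg fun i _ => mul_self_nonneg _
      have hexp : (x - v) ⬝ᵥ (x - v) = x ⬝ᵥ x - u ⬝ᵥ u := by
        have hvx : v ⬝ᵥ x = u ⬝ᵥ u := by rw [dotProduct_comm]; exact hxv
        rw [sub_dotProduct, dotProduct_sub, dotProduct_sub, hxv, hvx, hvv]
        ring
      linarith [hexp ▸ hnn]
    have hxx : x ⬝ᵥ x ≤ (n : ℝ) := by
      have : ∀ i, x i * x i ≤ 1 := by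
        intro i
        have := hx i
        nlinarith [abs_nonneg (x i), sq_abs (x i)]
      calc x ⬝ᵥ x = ∑ i, x i * x i := rfl
        _ ≤ ∑ _i : Fin n, (1 : ℝ) := Finset.sum_le_sum fun i _ => this i
        _ = n := by simp
    have huu : ∑ i, (u i) ^ 2 = u ⬝ᵥ u := by
      simp [dotProduct, sq]
    rw [huu]
    exact Real.sqrt_le_sqrt (key.trans hxx)
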